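/- For every g ≥ 1 and every tree compression (V, A, E) of the g×g rook graph, the number of compression edges satisfies |E| ≥ g³/32 − g², i.e., 32·(|E| + g²) ≥ g³. -/

import Mathlib

open Finset

section Defs

variable {α : Type*}

/-- The arc relation induced by a finite set of arcs. -/
def ArcRel (A : Finset (α × α)) (x y : α) : Prop := (x, y) ∈ A

/-- The cluster of a vertex `v`: the set of original vertices (elements of `Vbar`,
which are exactly the sinks of the cluster DAG) reachable from `v` in `(V, A)`. -/
def Cluster [DecidableEq α] (Vbar : Finset α) (A : Finset (α × α)) (v : α) : Set α :=
  {u | u ∈ Vbar ∧ Relation.ReflTransGen (ArcRel A) v u}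

/-- `(V, A, E)` is a DAG compression of the directed graph `(Vbar, Ebar)`. -/
structure IsDagCompression [DecidableEq α] (Vbar : Finset α) (Ebar : Finset (α × α))
    (V : Finset α) (A E : Finset (α × α)) : Prop where
  vbar_subset : Vbar ⊆ V
  arcs_subset : A ⊆ V ×ˢ V
  acyclic : ∀ v : α, ¬ Relation.TransGen (ArcRel A) v v
  sinks : ∀ v ∈ V, ((∀ u, (v, u) ∉ A) ↔ v ∈ Vbar)
  edges_subset : E ⊆ V ×ˢ V
  represents : (↑Ebar : Set (α × α)) =
    ⋃ e ∈ E, (Cluster Vbar A e.1) ×ˢ (Cluster Vbar A e.2)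

/-- An optimal DAG compression: no DAG compression of the same graph has smaller size
`|A| + |E|`. -/
def IsOptimalDagCompression [DecidableEq α] (Vbar : Finset α) (Ebar : Finset (α × α))
    (V : Finset α) (A E : Finset (α × α)) : Prop :=
  IsDagCompression Vbar Ebar V A E ∧
    ∀ (V' : Finset α) (A' E' : Finset (α × α)),
      IsDagCompression Vbar Ebar V' A' E' → A.card + E.card ≤ A'.card + E'.card

/-- The minimum size `|A| + |E|` of a DAG compression of `(Vbar, Ebar)`. -/
noncomputable def minCompSize [DecidableEq α] (Vbar : Finset α) (Ebar : Finset (α × α)) : ℕ :=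
  sInf {n | ∃ (V : Finset α) (A E : Finset (α × α)),
    IsDagCompression Vbar Ebar V A E ∧ A.card + E.card = n}

/-- Two vertices are twins in a directed graph with edge set `F`. -/
def Twins (F : Finset (α × α)) (t₁ t₂ : α) : Prop :=
  (∀ v, (v, t₁) ∈ F ↔ (v, t₂) ∈ F) ∧ (∀ v, (t₁, v) ∈ F ↔ (t₂, v) ∈ F)

/-- `(V, A)` is a rooted tree: there is a root `r ∈ V` from which every vertex of `V`
is reachable by a unique directed path. -/
def IsTreeOn (V : Finset α) (A : Finset (α × α)) : Prop :=
  ∃ r ∈ V, ∀ v ∈ V, ∃! l : List α,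
    l.Chain' (ArcRel A) ∧ l.head? = some r ∧ l.getLast? = some v

end Defs

/-- Vertex set of the `g × g` rook graph: the grid `{1,…,g} × {1,…,g}`. -/
def rookV (g : ℕ) : Finset (ℕ × ℕ) := Finset.Icc 1 g ×ˢ Finset.Icc 1 g

/-- Edge set of the `g × g` rook graph: `(r₁,c₁) → (r₂,c₂)` iff `r₁ = r₂ ∨ c₁ = c₂`. -/
def rookE (g : ℕ) : Finset ((ℕ × ℕ) × (ℕ × ℕ)) :=
  (rookV g ×ˢ rookV g).filter (fun e => e.1.1 = e.2.1 ∨ e.1.2 = e.2.2)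

section Tig

variable {α : Type*} [DecidableEq α]

/-- Vertex type used for twinned incidence graphs: either an element of the universe
(second shore) or one of the fresh vertices `a_S`, `b_S` (first shore). -/
abbrev TigVertex (α : Type*) := α ⊕ (Finset α × Bool)

/-- The fresh vertex `a_S`. -/
def aVert (S : Finset α) : TigVertex α := Sum.inr (S, false)

/-- The fresh vertex `b_S`. -/
def bVert (S : Finset α) : TigVertex α := Sum.inr (S, true)

/-- Vertex set of the twinned incidence graph of a collection `T` of subsets of `U`. -/
def tigV (U : Finset α) (T : Finset (Finset α)) : Finset (TigVertex α) :=
  U.image Sum.inl ∪ T.image aVert ∪ T.image bVert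

/-- Edge set of the twinned incidence graph: edges `(a_S, s)` and `(b_S, s)` for
`S ∈ T` and `s ∈ S`. -/
def tigE (T : Finset (Finset α)) : Finset (TigVertex α × TigVertex α) :=
  T.biUnion fun S =>
    S.image (fun s => (aVert S, Sum.inl s)) ∪ S.image (fun s => (bVert S, Sum.inl s))

end Tig

/-- `{S ∩ {1,…,i} : S ∈ T, 1 ≤ i ≤ m} ∖ {∅}` together with all singletons `{j}`, `j ∈ {1,…,m}`. -/
def hatCollection (m : ℕ) (T : Finset (Finset ℕ)) : Finset (Finset ℕ) :=
  (Finset.Icc 1 m).image (fun j => ({j} : Finset ℕ)) ∪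
    ((T ×ˢ Finset.Icc 1 m).image (fun p => p.1 ∩ Finset.Icc 1 p.2)).erase ∅
section TreeAux

variable {α : Type*} [DecidableEq α] {V : Finset α} {A : Finset (α × α)}

lemma unique_parent (hsub : A ⊆ V ×ˢ V) (htree : IsTreeOn V A)
    {x a b : α} (ha : (a, x) ∈ A) (hb : (b, x) ∈ A) : a = b := by
  obtain ⟨r, hr, huniq⟩ := htree
  have haV : a ∈ V := (Finset.mem_product.1 (hsub ha)).1
  have hbV : b ∈ V := (Finset.mem_product.1 (hsub hb)).1
  have hxV : x ∈ V := (Finset.mem_product.1 (hsub ha)).2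
  obtain ⟨la, ⟨hca, hha, hla⟩, -⟩ := huniq a haV
  obtain ⟨lb, ⟨hcb, hhb, hlb⟩, -⟩ := huniq b hbV
  have key : ∀ (l : List α) (c : α), l.Chain' (ArcRel A) → l.head? = some r →
      l.getLast? = some c → (c, x) ∈ A →
      ((l ++ [x]).Chain' (ArcRel A) ∧ (l ++ [x]).head? = some r ∧
        (l ++ [x]).getLast? = some x) := by
    intro l c hc hh hl harc
    have hne : l ≠ [] := by rintro rfl; simp at hh
    refine ⟨List.isChain_append.2 ⟨hc, List.isChain_singleton x, ?_⟩, ?_, List.getLast?_concat⟩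
    · intro p hp q hq
      simp only [List.head?_cons, Option.mem_def, Option.some.injEq] at hq
      rw [hl] at hp
      simp only [Option.mem_def, Option.some.injEq] at hp
      subst hp; subst hq; exact harc
    · rw [List.head?_append, hh]; rfl
  obtain ⟨lx, -, hux⟩ := huniq x hxV
  have e1 := hux (la ++ [x]) (key la a hca hha hla ha)
  have e2 := hux (lb ++ [x]) (key lb b hcb hhb hlb hb)
  have : la ++ [x] = lb ++ [x] := e1.trans e2.symm
  have : la = lb := by
    have := congrArg List.reverse this
    simp at this
    exact this
  rw [this, hlb] at hla
  exact (Option.some.inj hla).symm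

lemma reach_comparable (hsub : A ⊆ V ×ˢ V) (htree : IsTreeOn V A)
    {u v p : α} (hup : Relation.ReflTransGen (ArcRel A) u p)
    (hvp : Relation.ReflTransGen (ArcRel A) v p) :
    Relation.ReflTransGen (ArcRel A) u v ∨ Relation.ReflTransGen (ArcRel A) v u := by
  revert hvp
  induction hup with
  | refl => exact fun hvp => Or.inr hvp
  | @tail b c hub harc ih =>
    intro hvp
    rcases hvp.cases_tail with rfl | ⟨d, hvd, hdc⟩
    · exact Or.inl (hub.tail harc)
    · have hdb : d = b := unique_parent hsub htree hdc harc
      exact ih (hdb ▸ hvd)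

lemma cluster_mono {Vbar : Finset α} {u v : α}
    (h : Relation.ReflTransGen (ArcRel A) u v) :
    Cluster Vbar A v ⊆ Cluster Vbar A u := by
  intro y hy
  exact ⟨hy.1, h.trans hy.2⟩

lemma cluster_comparable (hsub : A ⊆ V ×ˢ V) (htree : IsTreeOn V A)
    {Vbar : Finset α} {u v : α} {y : α}
    (hu : y ∈ Cluster Vbar A u) (hv : y ∈ Cluster Vbar A v) :
    Cluster Vbar A u ⊆ Cluster Vbar A v ∨ Cluster Vbar A v ⊆ Cluster Vbar A u := by
  rcases reach_comparable hsub htree hu.2 hv.2 with h | h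
  · exact Or.inr (cluster_mono h)
  · exact Or.inl (cluster_mono h)

end TreeAux
section MainAux

variable {β : Type*} [DecidableEq β] {V : Finset β} {A : Finset (β × β)}

/-- Pulled-back cluster predicate machinery. -/
def Clu (g : ℕ) (f : ℕ × ℕ → β) (A : Finset (β × β)) (u : β) : Set β :=
  Cluster ((rookV g).image f) A u

def RowGood (g : ℕ) (f : ℕ × ℕ → β) (A : Finset (β × β)) (p : ℕ × ℕ) : Prop :=
  ∀ u : β, f p ∈ Clu g f A u → (∀ x ∈ rookV g, f x ∈ Clu g f A u → x.1 = p.1) →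
    ∀ x ∈ rookV g, f x ∈ Clu g f A u → x = p

def ColGood (g : ℕ) (f : ℕ × ℕ → β) (A : Finset (β × β)) (p : ℕ × ℕ) : Prop :=
  ∀ u : β, f p ∈ Clu g f A u → (∀ x ∈ rookV g, f x ∈ Clu g f A u → x.2 = p.2) →
    ∀ x ∈ rookV g, f x ∈ Clu g f A u → x = p

def IsBad (g : ℕ) (f : ℕ × ℕ → β) (A : Finset (β × β)) (p q : ℕ × ℕ) : Prop :=
  ∃ u : β, f p ∈ Clu g f A u ∧
    (∀ y ∈ rookV g, f y ∈ Clu g f A u → (y.1 = q.1 ∨ y.2 = q.2)) ∧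
    ∃ x ∈ rookV g, f x ∈ Clu g f A u ∧ x ≠ p

def Hard (g : ℕ) (f : ℕ × ℕ → β) (A : Finset (β × β)) (p q : ℕ × ℕ) : Prop :=
  ((p.1 = q.1 ∧ p.2 ≠ q.2 ∧ RowGood g f A p ∧ RowGood g f A q) ∨
    (p.2 = q.2 ∧ p.1 ≠ q.1 ∧ ColGood g f A p ∧ ColGood g f A q)) ∧
  ¬ IsBad g f A p q ∧ ¬ IsBad g f A q p

lemma good_or (hsub : A ⊆ V ×ˢ V) (htree : IsTreeOn V A)
    (g : ℕ) (f : ℕ × ℕ → β) (p : ℕ × ℕ) :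
    RowGood g f A p ∨ ColGood g f A p := by
  by_contra h
  push_neg at h
  obtain ⟨h1, h2⟩ := h
  unfold RowGood at h1; unfold ColGood at h2
  push_neg at h1 h2
  obtain ⟨u, hpu, hrow, x, hx, hxu, hxp⟩ := h1
  obtain ⟨v, hpv, hcol, y, hy, hyv, hyp⟩ := h2
  rcases cluster_comparable hsub htree hpu hpv with hss | hss
  · exact hxp (Prod.ext (hrow x hx hxu) (hcol x hx (hss hxu)))
  · exact hyp (Prod.ext (hrow y hy (hss hyv)) (hcol y hy hyv))

lemma bad_bad_row (hsub : A ⊆ V ×ˢ V) (htree : IsTreeOn V A)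
    {g : ℕ} {f : ℕ × ℕ → β} {p q q' : ℕ × ℕ}
    (hpg : RowGood g f A p) (hq : q.1 = p.1) (hq' : q'.1 = p.1) (hqq : q.2 ≠ q'.2)
    (h1 : IsBad g f A p q) (h2 : IsBad g f A p q') : False := by
  unfold IsBad at h1 h2
  obtain ⟨u, hpu, hcru, x, hx, hxu, hxp⟩ := h1
  obtain ⟨u', hpu', hcru', x', hx', hxu', hxp'⟩ := h2
  have key : ∀ w : β, f p ∈ Clu g f A w →
      (∀ y ∈ rookV g, f y ∈ Clu g f A w → (y.1 = q.1 ∨ y.2 = q.2)) →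
      (∀ y ∈ rookV g, f y ∈ Clu g f A w → (y.1 = q'.1 ∨ y.2 = q'.2)) →
      ∀ z ∈ rookV g, f z ∈ Clu g f A w → z = p := by
    intro w hw hc1 hc2
    refine hpg w hw ?_
    intro y hy hyw
    rcases hc1 y hy hyw with e1 | e1
    · rw [e1, hq]
    · rcases hc2 y hy hyw with e2 | e2
      · rw [e2, hq']
      · exact absurd (e1.symm.trans e2) hqq
  rcases cluster_comparable hsub htree hpu hpu' with hss | hss
  · exact hxp (key u hpu hcru (fun y hy hyw => hcru' y hy (hss hyw)) x hx hxu)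
  · exact hxp' (key u' hpu' (fun y hy hyw => hcru y hy (hss hyw)) hcru' x' hx' hxu')

lemma bad_bad_col (hsub : A ⊆ V ×ˢ V) (htree : IsTreeOn V A)
    {g : ℕ} {f : ℕ × ℕ → β} {p q q' : ℕ × ℕ}
    (hpg : ColGood g f A p) (hq : q.2 = p.2) (hq' : q'.2 = p.2) (hqq : q.1 ≠ q'.1)
    (h1 : IsBad g f A p q) (h2 : IsBad g f A p q') : False := by
  unfold IsBad at h1 h2
  obtain ⟨u, hpu, hcru, x, hx, hxu, hxp⟩ := h1
  obtain ⟨u', hpu', hcru', x', hx', hxu', hxp'⟩ := h2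
  have key : ∀ w : β, f p ∈ Clu g f A w →
      (∀ y ∈ rookV g, f y ∈ Clu g f A w → (y.1 = q.1 ∨ y.2 = q.2)) →
      (∀ y ∈ rookV g, f y ∈ Clu g f A w → (y.1 = q'.1 ∨ y.2 = q'.2)) →
      ∀ z ∈ rookV g, f z ∈ Clu g f A w → z = p := by
    intro w hw hc1 hc2
    refine hpg w hw ?_
    intro y hy hyw
    rcases hc1 y hy hyw with e1 | e1
    · rcases hc2 y hy hyw with e2 | e2
      · exact absurd (e1.symm.trans e2) hqq
      · rw [e2, hq']
    · rw [e1, hq]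
  rcases cluster_comparable hsub htree hpu hpu' with hss | hss
  · exact hxp (key u hpu hcru (fun y hy hyw => hcru' y hy (hss hyw)) x hx hxu)
  · exact hxp' (key u' hpu' (fun y hy hyw => hcru y hy (hss hyw)) hcru' x' hx' hxu')

end MainAux
section CountAux

variable {β : Type*} [DecidableEq β]

open Classical in
/-- Row-good points in row `r`. -/
noncomputable def GrF (g : ℕ) (f : ℕ × ℕ → β) (A : Finset (β × β)) (r : ℕ) : Finset (ℕ × ℕ) :=
  (rookV g).filter (fun p => p.1 = r ∧ RowGood g f A p)

open Classical in
noncomputable def GcF (g : ℕ) (f : ℕ × ℕ → β) (A : Finset (β × β)) (c : ℕ) : Finset (ℕ × ℕ) :=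
  (rookV g).filter (fun p => p.2 = c ∧ ColGood g f A p)

open Classical in
noncomputable def HrF (g : ℕ) (f : ℕ × ℕ → β) (A : Finset (β × β)) (r : ℕ) :
    Finset ((ℕ × ℕ) × (ℕ × ℕ)) :=
  (GrF g f A r).offDiag.filter (fun z => ¬ IsBad g f A z.1 z.2 ∧ ¬ IsBad g f A z.2 z.1)

open Classical in
noncomputable def HcF (g : ℕ) (f : ℕ × ℕ → β) (A : Finset (β × β)) (c : ℕ) :
    Finset ((ℕ × ℕ) × (ℕ × ℕ)) :=
  (GcF g f A c).offDiag.filter (fun z => ¬ IsBad g f A z.1 z.2 ∧ ¬ IsBad g f A z.2 z.1)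

open Classical in
/-- The hard pairs. -/
noncomputable def HF (g : ℕ) (f : ℕ × ℕ → β) (A : Finset (β × β)) :
    Finset ((ℕ × ℕ) × (ℕ × ℕ)) :=
  ((rookV g) ×ˢ (rookV g)).filter (fun z => Hard g f A z.1 z.2)

end CountAux
/-- every tree compression of the `g × g` rook graph has at least
`g³/32 − g²` compression edges, i.e. `32·(|E| + g²) ≥ g³`. -/
theorem tree_compression_rook_lower_bound {β : Type*} [DecidableEq β]
    (g : ℕ) (hg : 1 ≤ g) (f : ℕ × ℕ → β) (hf : Function.Injective f)
    (V : Finset β) (A E : Finset (β × β))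
    (hD : IsDagCompression ((rookV g).image f) ((rookE g).image (Prod.map f f)) V A E)
    (htree : IsTreeOn V A) :
    g ^ 3 ≤ 32 * (E.card + g ^ 2) := by
  classical
  have hsubA := hD.arcs_subset
  -- rook vertex basics
  have hVcard : (rookV g).card = g * g := by
    simp [rookV, Nat.card_Icc]
  have hVfst : ∀ p ∈ rookV g, p.1 ∈ Finset.Icc 1 g ∧ p.2 ∈ Finset.Icc 1 g := by
    intro p hp
    exact Finset.mem_product.1 hp
  -- rectangle property
  have hrect : ∀ e ∈ E, ∀ x ∈ rookV g, ∀ y ∈ rookV g,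
      f x ∈ Clu g f A e.1 → f y ∈ Clu g f A e.2 → (x.1 = y.1 ∨ x.2 = y.2) := by
    intro e he x hx y hy hfx hfy
    have hmem : ((f x, f y) : β × β) ∈
        (↑((rookE g).image (Prod.map f f)) : Set (β × β)) := by
      rw [hD.represents]
      exact Set.mem_iUnion₂.2 ⟨e, he, Set.mk_mem_prod hfx hfy⟩
    have hmem' : ((f x, f y) : β × β) ∈ (rookE g).image (Prod.map f f) := by
      exact_mod_cast hmem
    obtain ⟨ab, hab, heq⟩ := Finset.mem_image.1 hmem'
    have e1 : ab.1 = x := hf (congrArg Prod.fst heq)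
    have e2 : ab.2 = y := hf (congrArg Prod.snd heq)
    have := (Finset.mem_filter.1 hab).2
    rw [← e1, ← e2]
    exact this
  -- covering property
  have hcover : ∀ p q : ℕ × ℕ, (p, q) ∈ rookE g →
      ∃ e ∈ E, f p ∈ Clu g f A e.1 ∧ f q ∈ Clu g f A e.2 := by
    intro p q hpq
    have h1 : ((f p, f q) : β × β) ∈
        (↑((rookE g).image (Prod.map f f)) : Set (β × β)) := by
      exact_mod_cast Finset.mem_image_of_mem (Prod.map f f) hpq
    rw [hD.represents] at h1
    obtain ⟨e, he, hm⟩ := Set.mem_iUnion₂.1 h1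
    exact ⟨e, he, hm.1, hm.2⟩
  -- hard pairs
  have hHmem : ∀ z ∈ HF g f A, z.1 ∈ rookV g ∧ z.2 ∈ rookV g ∧ Hard g f A z.1 z.2 := by
    intro z hz
    have h := Finset.mem_filter.1 hz
    exact ⟨(Finset.mem_product.1 h.1).1, (Finset.mem_product.1 h.1).2, h.2⟩
  have hHadj : ∀ z ∈ HF g f A, (z.1, z.2) ∈ rookE g := by
    intro z hz
    obtain ⟨h1, h2, h3⟩ := hHmem z hz
    refine Finset.mem_filter.2 ⟨Finset.mem_product.2 ⟨h1, h2⟩, ?_⟩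
    rcases h3.1 with h | h
    · exact Or.inl h.1
    · exact Or.inr h.1
  have hforce : ∀ z ∈ HF g f A, ∀ e ∈ E, f z.1 ∈ Clu g f A e.1 → f z.2 ∈ Clu g f A e.2 →
      (∀ x ∈ rookV g, f x ∈ Clu g f A e.1 → x = z.1) ∧
      (∀ y ∈ rookV g, f y ∈ Clu g f A e.2 → y = z.2) := by
    intro z hz e he h1 h2
    obtain ⟨hz1, hz2, hhard⟩ := hHmem z hz
    obtain ⟨-, hnb1, hnb2⟩ := hhard
    constructor
    · intro x hx hxe
      by_contra hne
      refine hnb1 ?_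
      unfold IsBad
      exact ⟨e.1, h1, fun y hy hye => hrect e he y hy z.2 hz2 hye h2, x, hx, hxe, hne⟩
    · intro y hy hye
      by_contra hne
      refine hnb2 ?_
      unfold IsBad
      exact ⟨e.2, h2,
        fun x hx hxe => (hrect e he z.1 hz1 x hx h1 hxe).imp Eq.symm Eq.symm,
        y, hy, hye, hne⟩
  -- injection into E
  have hHE : (HF g f A).card ≤ E.card := by
    have hex : ∀ z : (ℕ × ℕ) × (ℕ × ℕ), z ∈ HF g f A →
        ∃ e, e ∈ E ∧ (f z.1 ∈ Clu g f A e.1 ∧ f z.2 ∈ Clu g f A e.2) := by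
      intro z hz
      obtain ⟨e, he, h⟩ := hcover z.1 z.2 (hHadj z hz)
      exact ⟨e, he, h⟩
    haveI : Nonempty (β × β) := ⟨(f (1,1), f (1,1))⟩
    choose! φ hφE hφm using hex
    refine Finset.card_le_card_of_injOn φ (fun z hz => hφE z hz) ?_
    intro z hz z' hz' heq
    rw [Finset.mem_coe] at hz hz'
    have F := hforce z hz (φ z) (hφE z hz) (hφm z hz).1 (hφm z hz).2
    have h1' := (hφm z' hz').1
    have h2' := (hφm z' hz').2
    rw [← heq] at h1' h2'
    have e1 : z'.1 = z.1 := F.1 z'.1 (hHmem z' hz').1 h1'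
    have e2 : z'.2 = z.2 := F.2 z'.2 (hHmem z' hz').2.1 h2'
    exact (Prod.ext e1 e2).symm
  -- membership helpers
  have hGr : ∀ r : ℕ, ∀ p ∈ GrF g f A r, p ∈ rookV g ∧ p.1 = r ∧ RowGood g f A p := by
    intro r p hp
    have h := Finset.mem_filter.1 hp
    exact ⟨h.1, h.2⟩
  have hGc : ∀ c : ℕ, ∀ p ∈ GcF g f A c, p ∈ rookV g ∧ p.2 = c ∧ ColGood g f A p := by
    intro c p hp
    have h := Finset.mem_filter.1 hp
    exact ⟨h.1, h.2⟩
  have hHrm : ∀ r : ℕ, ∀ z ∈ HrF g f A r,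
      (z.1 ∈ GrF g f A r ∧ z.2 ∈ GrF g f A r ∧ z.1 ≠ z.2) ∧
      ¬ IsBad g f A z.1 z.2 ∧ ¬ IsBad g f A z.2 z.1 := by
    intro r z hz
    have h := Finset.mem_filter.1 hz
    exact ⟨Finset.mem_offDiag.1 h.1, h.2⟩
  have hHcm : ∀ c : ℕ, ∀ z ∈ HcF g f A c,
      (z.1 ∈ GcF g f A c ∧ z.2 ∈ GcF g f A c ∧ z.1 ≠ z.2) ∧
      ¬ IsBad g f A z.1 z.2 ∧ ¬ IsBad g f A z.2 z.1 := by
    intro c z hz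
    have h := Finset.mem_filter.1 hz
    exact ⟨Finset.mem_offDiag.1 h.1, h.2⟩
  -- Hr lands in H
  have hHrH : ∀ r : ℕ, HrF g f A r ⊆ HF g f A := by
    intro r z hz
    obtain ⟨⟨hz1, hz2, hne⟩, hb1, hb2⟩ := hHrm r z hz
    obtain ⟨hv1, hr1, hg1⟩ := hGr r z.1 hz1
    obtain ⟨hv2, hr2, hg2⟩ := hGr r z.2 hz2
    refine Finset.mem_filter.2 ⟨Finset.mem_product.2 ⟨hv1, hv2⟩, ?_⟩
    refine ⟨Or.inl ⟨hr1.trans hr2.symm, ?_, hg1, hg2⟩, hb1, hb2⟩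
    intro hcol
    exact hne (Prod.ext (hr1.trans hr2.symm) hcol)
  have hHcH : ∀ c : ℕ, HcF g f A c ⊆ HF g f A := by
    intro c z hz
    obtain ⟨⟨hz1, hz2, hne⟩, hb1, hb2⟩ := hHcm c z hz
    obtain ⟨hv1, hr1, hg1⟩ := hGc c z.1 hz1
    obtain ⟨hv2, hr2, hg2⟩ := hGc c z.2 hz2
    refine Finset.mem_filter.2 ⟨Finset.mem_product.2 ⟨hv1, hv2⟩, ?_⟩
    refine ⟨Or.inr ⟨hr1.trans hr2.symm, ?_, hg1, hg2⟩, hb1, hb2⟩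
    intro hrow
    exact hne (Prod.ext hrow (hr1.trans hr2.symm))
  -- disjointness and the sum bound
  have hsumHE : (∑ r ∈ Finset.Icc 1 g, (HrF g f A r).card) +
      (∑ c ∈ Finset.Icc 1 g, (HcF g f A c).card) ≤ E.card := by
    have hdr : ∀ r₁ ∈ Finset.Icc 1 g, ∀ r₂ ∈ Finset.Icc 1 g, r₁ ≠ r₂ →
        Disjoint (HrF g f A r₁) (HrF g f A r₂) := by
      intro r₁ _ r₂ _ hne
      rw [Finset.disjoint_left]
      intro z h1 h2
      have e1 := (hGr r₁ z.1 ((hHrm r₁ z h1).1.1)).2.1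
      have e2 := (hGr r₂ z.1 ((hHrm r₂ z h2).1.1)).2.1
      exact hne (e1.symm.trans e2)
    have hdc : ∀ c₁ ∈ Finset.Icc 1 g, ∀ c₂ ∈ Finset.Icc 1 g, c₁ ≠ c₂ →
        Disjoint (HcF g f A c₁) (HcF g f A c₂) := by
      intro c₁ _ c₂ _ hne
      rw [Finset.disjoint_left]
      intro z h1 h2
      have e1 := (hGc c₁ z.1 ((hHcm c₁ z h1).1.1)).2.1
      have e2 := (hGc c₂ z.1 ((hHcm c₂ z h2).1.1)).2.1
      exact hne (e1.symm.trans e2)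
    have hcard1 : ((Finset.Icc 1 g).biUnion (HrF g f A)).card
        = ∑ r ∈ Finset.Icc 1 g, (HrF g f A r).card := Finset.card_biUnion hdr
    have hcard2 : ((Finset.Icc 1 g).biUnion (HcF g f A)).card
        = ∑ c ∈ Finset.Icc 1 g, (HcF g f A c).card := Finset.card_biUnion hdc
    have hdisjU : Disjoint ((Finset.Icc 1 g).biUnion (HrF g f A))
        ((Finset.Icc 1 g).biUnion (HcF g f A)) := by
      rw [Finset.disjoint_left]
      intro z h1 h2
      obtain ⟨r, -, hzr⟩ := Finset.mem_biUnion.1 h1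
      obtain ⟨c, -, hzc⟩ := Finset.mem_biUnion.1 h2
      obtain ⟨⟨hz1, hz2, hne⟩, -, -⟩ := hHrm r z hzr
      obtain ⟨⟨hw1, hw2, -⟩, -, -⟩ := hHcm c z hzc
      have e1 := (hGr r z.1 hz1).2.1
      have e2 := (hGr r z.2 hz2).2.1
      have e3 := (hGc c z.1 hw1).2.1
      have e4 := (hGc c z.2 hw2).2.1
      exact hne (Prod.ext (e1.trans e2.symm) (e3.trans e4.symm))
    have hsubU : ((Finset.Icc 1 g).biUnion (HrF g f A)) ∪
        ((Finset.Icc 1 g).biUnion (HcF g f A)) ⊆ HF g f A := by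
      refine Finset.union_subset ?_ ?_
      · exact Finset.biUnion_subset.2 fun r _ => hHrH r
      · exact Finset.biUnion_subset.2 fun c _ => hHcH c
    calc (∑ r ∈ Finset.Icc 1 g, (HrF g f A r).card) +
        (∑ c ∈ Finset.Icc 1 g, (HcF g f A c).card)
        = (((Finset.Icc 1 g).biUnion (HrF g f A)) ∪
            ((Finset.Icc 1 g).biUnion (HcF g f A))).card := by
          rw [Finset.card_union_of_disjoint hdisjU, hcard1, hcard2]
      _ ≤ (HF g f A).card := Finset.card_le_card hsubU
      _ ≤ E.card := hHE
  -- per-row quadratic bound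
  have hrowB : ∀ r : ℕ, (GrF g f A r).card ^ 2 ≤ (HrF g f A r).card + 3 * (GrF g f A r).card := by
    intro r
    have hB1 : (((GrF g f A r).offDiag).filter (fun z => IsBad g f A z.1 z.2)).card
        ≤ (GrF g f A r).card := by
      refine Finset.card_le_card_of_injOn Prod.fst ?_ ?_
      · intro z hz
        exact (Finset.mem_offDiag.1 (Finset.mem_filter.1 hz).1).1
      · intro z hz z' hz' heq
        rw [Finset.mem_coe] at hz hz'
        obtain ⟨hod, hb⟩ := Finset.mem_filter.1 hz
        obtain ⟨hod', hb'⟩ := Finset.mem_filter.1 hz'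
        obtain ⟨h1, h2, hne⟩ := Finset.mem_offDiag.1 hod
        obtain ⟨h1', h2', hne'⟩ := Finset.mem_offDiag.1 hod'
        obtain ⟨hv1, hr1, hg1⟩ := hGr r z.1 h1
        obtain ⟨hv2, hr2, -⟩ := hGr r z.2 h2
        obtain ⟨hv2', hr2', -⟩ := hGr r z'.2 h2'
        refine Prod.ext heq ?_
        by_contra hne2
        have hsnd : z.2.2 ≠ z'.2.2 := fun hc => hne2 (Prod.ext (hr2.trans hr2'.symm) hc)
        rw [← heq] at hb'
        exact bad_bad_row hsubA htree hg1 (hr2.trans hr1.symm) (hr2'.trans hr1.symm) hsnd hb hb'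
    have hB2 : (((GrF g f A r).offDiag).filter (fun z => IsBad g f A z.2 z.1)).card
        ≤ (GrF g f A r).card := by
      refine Finset.card_le_card_of_injOn Prod.snd ?_ ?_
      · intro z hz
        exact (Finset.mem_offDiag.1 (Finset.mem_filter.1 hz).1).2.1
      · intro z hz z' hz' heq
        rw [Finset.mem_coe] at hz hz'
        obtain ⟨hod, hb⟩ := Finset.mem_filter.1 hz
        obtain ⟨hod', hb'⟩ := Finset.mem_filter.1 hz'
        obtain ⟨h1, h2, hne⟩ := Finset.mem_offDiag.1 hod
        obtain ⟨h1', h2', hne'⟩ := Finset.mem_offDiag.1 hod'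
        obtain ⟨hv1, hr1, -⟩ := hGr r z.1 h1
        obtain ⟨hv2, hr2, hg2⟩ := hGr r z.2 h2
        obtain ⟨hv1', hr1', -⟩ := hGr r z'.1 h1'
        refine Prod.ext ?_ heq
        by_contra hne2
        have hsnd : z.1.2 ≠ z'.1.2 := fun hc => hne2 (Prod.ext (hr1.trans hr1'.symm) hc)
        rw [← heq] at hb'
        exact bad_bad_row hsubA htree hg2 (hr1.trans hr2.symm) (hr1'.trans hr2.symm) hsnd hb hb'
    have hcov : (GrF g f A r).offDiag ⊆ HrF g f A r ∪
        (((GrF g f A r).offDiag).filter (fun z => IsBad g f A z.1 z.2)) ∪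
        (((GrF g f A r).offDiag).filter (fun z => IsBad g f A z.2 z.1)) := by
      intro z hz
      by_cases c1 : IsBad g f A z.1 z.2
      · exact Finset.mem_union.2 (Or.inl (Finset.mem_union.2 (Or.inr
          (Finset.mem_filter.2 ⟨hz, c1⟩))))
      by_cases c2 : IsBad g f A z.2 z.1
      · exact Finset.mem_union.2 (Or.inr (Finset.mem_filter.2 ⟨hz, c2⟩))
      · exact Finset.mem_union.2 (Or.inl (Finset.mem_union.2 (Or.inl
          (Finset.mem_filter.2 ⟨hz, c1, c2⟩))))
    have hc1 := Finset.card_le_card hcov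
    have hc2 := Finset.card_union_le (HrF g f A r ∪
        (((GrF g f A r).offDiag).filter (fun z => IsBad g f A z.1 z.2)))
        (((GrF g f A r).offDiag).filter (fun z => IsBad g f A z.2 z.1))
    have hc3 := Finset.card_union_le (HrF g f A r)
        (((GrF g f A r).offDiag).filter (fun z => IsBad g f A z.1 z.2))
    have hod := Finset.offDiag_card (GrF g f A r)
    have : (GrF g f A r).card * (GrF g f A r).card - (GrF g f A r).card
        ≤ (HrF g f A r).card + 2 * (GrF g f A r).card := by omega
    have h4 := (Nat.sub_le_iff_le_add).1 this
    calc (GrF g f A r).card ^ 2 = (GrF g f A r).card * (GrF g f A r).card := by ring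
      _ ≤ (HrF g f A r).card + 2 * (GrF g f A r).card + (GrF g f A r).card := h4
      _ = (HrF g f A r).card + 3 * (GrF g f A r).card := by ring
  -- per-column quadratic bound
  have hcolB : ∀ c : ℕ, (GcF g f A c).card ^ 2 ≤ (HcF g f A c).card + 3 * (GcF g f A c).card := by
    intro c
    have hB1 : (((GcF g f A c).offDiag).filter (fun z => IsBad g f A z.1 z.2)).card
        ≤ (GcF g f A c).card := by
      refine Finset.card_le_card_of_injOn Prod.fst ?_ ?_
      · intro z hz
        exact (Finset.mem_offDiag.1 (Finset.mem_filter.1 hz).1).1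
      · intro z hz z' hz' heq
        rw [Finset.mem_coe] at hz hz'
        obtain ⟨hod, hb⟩ := Finset.mem_filter.1 hz
        obtain ⟨hod', hb'⟩ := Finset.mem_filter.1 hz'
        obtain ⟨h1, h2, hne⟩ := Finset.mem_offDiag.1 hod
        obtain ⟨h1', h2', hne'⟩ := Finset.mem_offDiag.1 hod'
        obtain ⟨hv1, hr1, hg1⟩ := hGc c z.1 h1
        obtain ⟨hv2, hr2, -⟩ := hGc c z.2 h2
        obtain ⟨hv2', hr2', -⟩ := hGc c z'.2 h2'
        refine Prod.ext heq ?_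
        by_contra hne2
        have hfst : z.2.1 ≠ z'.2.1 := fun hc => hne2 (Prod.ext hc (hr2.trans hr2'.symm))
        rw [← heq] at hb'
        exact bad_bad_col hsubA htree hg1 (hr2.trans hr1.symm) (hr2'.trans hr1.symm) hfst hb hb'
    have hB2 : (((GcF g f A c).offDiag).filter (fun z => IsBad g f A z.2 z.1)).card
        ≤ (GcF g f A c).card := by
      refine Finset.card_le_card_of_injOn Prod.snd ?_ ?_
      · intro z hz
        exact (Finset.mem_offDiag.1 (Finset.mem_filter.1 hz).1).2.1
      · intro z hz z' hz' heq
        rw [Finset.mem_coe] at hz hz'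
        obtain ⟨hod, hb⟩ := Finset.mem_filter.1 hz
        obtain ⟨hod', hb'⟩ := Finset.mem_filter.1 hz'
        obtain ⟨h1, h2, hne⟩ := Finset.mem_offDiag.1 hod
        obtain ⟨h1', h2', hne'⟩ := Finset.mem_offDiag.1 hod'
        obtain ⟨hv1, hr1, -⟩ := hGc c z.1 h1
        obtain ⟨hv2, hr2, hg2⟩ := hGc c z.2 h2
        obtain ⟨hv1', hr1', -⟩ := hGc c z'.1 h1'
        refine Prod.ext ?_ heq
        by_contra hne2
        have hfst : z.1.1 ≠ z'.1.1 := fun hc => hne2 (Prod.ext hc (hr1.trans hr1'.symm))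
        rw [← heq] at hb'
        exact bad_bad_col hsubA htree hg2 (hr1.trans hr2.symm) (hr1'.trans hr2.symm) hfst hb hb'
    have hcov : (GcF g f A c).offDiag ⊆ HcF g f A c ∪
        (((GcF g f A c).offDiag).filter (fun z => IsBad g f A z.1 z.2)) ∪
        (((GcF g f A c).offDiag).filter (fun z => IsBad g f A z.2 z.1)) := by
      intro z hz
      by_cases c1 : IsBad g f A z.1 z.2
      · exact Finset.mem_union.2 (Or.inl (Finset.mem_union.2 (Or.inr
          (Finset.mem_filter.2 ⟨hz, c1⟩))))
      by_cases c2 : IsBad g f A z.2 z.1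
      · exact Finset.mem_union.2 (Or.inr (Finset.mem_filter.2 ⟨hz, c2⟩))
      · exact Finset.mem_union.2 (Or.inl (Finset.mem_union.2 (Or.inl
          (Finset.mem_filter.2 ⟨hz, c1, c2⟩))))
    have hc1 := Finset.card_le_card hcov
    have hc2 := Finset.card_union_le (HcF g f A c ∪
        (((GcF g f A c).offDiag).filter (fun z => IsBad g f A z.1 z.2)))
        (((GcF g f A c).offDiag).filter (fun z => IsBad g f A z.2 z.1))
    have hc3 := Finset.card_union_le (HcF g f A c)
        (((GcF g f A c).offDiag).filter (fun z => IsBad g f A z.1 z.2))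
    have hod := Finset.offDiag_card (GcF g f A c)
    have : (GcF g f A c).card * (GcF g f A c).card - (GcF g f A c).card
        ≤ (HcF g f A c).card + 2 * (GcF g f A c).card := by omega
    have h4 := (Nat.sub_le_iff_le_add).1 this
    calc (GcF g f A c).card ^ 2 = (GcF g f A c).card * (GcF g f A c).card := by ring
      _ ≤ (HcF g f A c).card + 2 * (GcF g f A c).card + (GcF g f A c).card := h4
      _ = (HcF g f A c).card + 3 * (GcF g f A c).card := by ring
  -- fiberwise decomposition
  set a := ∑ r ∈ Finset.Icc 1 g, (GrF g f A r).card with ha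
  set b := ∑ c ∈ Finset.Icc 1 g, (GcF g f A c).card with hb
  have hfa : ((rookV g).filter (fun p => RowGood g f A p)).card = a := by
    rw [ha]
    rw [Finset.card_eq_sum_card_fiberwise (f := Prod.fst) (t := Finset.Icc 1 g)
      (fun p hp => (hVfst p (Finset.mem_filter.1 hp).1).1)]
    refine Finset.sum_congr rfl ?_
    intro r hr
    congr 1
    ext p
    simp only [Finset.mem_filter, GrF]
    tauto
  have hfb : ((rookV g).filter (fun p => ColGood g f A p)).card = b := by
    rw [hb]
    rw [Finset.card_eq_sum_card_fiberwise (f := Prod.snd) (t := Finset.Icc 1 g)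
      (fun p hp => (hVfst p (Finset.mem_filter.1 hp).1).2)]
    refine Finset.sum_congr rfl ?_
    intro c hc
    congr 1
    ext p
    simp only [Finset.mem_filter, GcF]
    tauto
  have hab : g * g ≤ a + b := by
    rw [← hfa, ← hfb, ← hVcard]
    refine le_trans (Finset.card_le_card ?_) (Finset.card_union_le _ _)
    intro p hp
    rcases good_or hsubA htree g f p with h | h
    · exact Finset.mem_union_left _ (Finset.mem_filter.2 ⟨hp, h⟩)
    · exact Finset.mem_union_right _ (Finset.mem_filter.2 ⟨hp, h⟩)
  have haU : a ≤ g * g := by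
    rw [← hfa, ← hVcard]; exact Finset.card_le_card (Finset.filter_subset _ _)
  have hbU : b ≤ g * g := by
    rw [← hfb, ← hVcard]; exact Finset.card_le_card (Finset.filter_subset _ _)
  -- Cauchy–Schwarz
  have hCS : ∀ k : ℕ → ℕ, (∑ r ∈ Finset.Icc 1 g, k r) ^ 2
      ≤ g * ∑ r ∈ Finset.Icc 1 g, (k r) ^ 2 := by
    intro k
    have h := sq_sum_le_card_mul_sum_sq (s := Finset.Icc 1 g) (f := fun r => (k r : ℕ))
    simpa [Nat.card_Icc] using h
  have hCSa : a ^ 2 ≤ g * ∑ r ∈ Finset.Icc 1 g, (GrF g f A r).card ^ 2 := hCS _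
  have hCSb : b ^ 2 ≤ g * ∑ c ∈ Finset.Icc 1 g, (GcF g f A c).card ^ 2 := hCS _
  have hSa : ∑ r ∈ Finset.Icc 1 g, (GrF g f A r).card ^ 2
      ≤ (∑ r ∈ Finset.Icc 1 g, (HrF g f A r).card) + 3 * a := by
    rw [ha, Finset.mul_sum, ← Finset.sum_add_distrib]
    exact Finset.sum_le_sum fun r _ => hrowB r
  have hSb : ∑ c ∈ Finset.Icc 1 g, (GcF g f A c).card ^ 2
      ≤ (∑ c ∈ Finset.Icc 1 g, (HcF g f A c).card) + 3 * b := by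
    rw [hb, Finset.mul_sum, ← Finset.sum_add_distrib]
    exact Finset.sum_le_sum fun c _ => hcolB c
  -- assemble the cubic bound
  have key : g ^ 3 ≤ 2 * E.card + 12 * g ^ 2 := by
    have s2 : (a + b) ^ 2 ≤ 2 * (a ^ 2 + b ^ 2) := by
      zify
      nlinarith [sq_nonneg ((a : ℤ) - b)]
    have s3 : (g * g) ^ 2 ≤ (a + b) ^ 2 := Nat.pow_le_pow_left hab 2
    have s5 : (∑ r ∈ Finset.Icc 1 g, (GrF g f A r).card ^ 2)
        + (∑ c ∈ Finset.Icc 1 g, (GcF g f A c).card ^ 2)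
        ≤ E.card + 6 * (g * g) := by
      have := add_le_add hSa hSb
      have h6 : 3 * a + 3 * b ≤ 6 * (g * g) := by omega
      omega
    have s6 : (g * g) ^ 2 ≤ 2 * (g * (E.card + 6 * (g * g))) := by
      calc (g * g) ^ 2 ≤ (a + b) ^ 2 := s3
        _ ≤ 2 * (a ^ 2 + b ^ 2) := s2
        _ ≤ 2 * (g * (∑ r ∈ Finset.Icc 1 g, (GrF g f A r).card ^ 2)
            + g * (∑ c ∈ Finset.Icc 1 g, (GcF g f A c).card ^ 2)) := by
              have := add_le_add hCSa hCSb
              omega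
        _ = 2 * (g * ((∑ r ∈ Finset.Icc 1 g, (GrF g f A r).card ^ 2)
            + (∑ c ∈ Finset.Icc 1 g, (GcF g f A c).card ^ 2))) := by ring
        _ ≤ 2 * (g * (E.card + 6 * (g * g))) := by
              have := Nat.mul_le_mul_left g s5
              omega
    have s7 : g * g ^ 3 ≤ g * (2 * E.card + 12 * g ^ 2) := by
      calc g * g ^ 3 = (g * g) ^ 2 := by ring
        _ ≤ 2 * (g * (E.card + 6 * (g * g))) := s6
        _ = g * (2 * E.card + 12 * g ^ 2) := by ring
    exact Nat.le_of_mul_le_mul_left s7 hg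
  -- conclude
  rcases le_or_gt g 32 with hle | hlt
  · calc g ^ 3 = g * g ^ 2 := by ring
      _ ≤ 32 * g ^ 2 := Nat.mul_le_mul_right _ hle
      _ ≤ 32 * (E.card + g ^ 2) := Nat.mul_le_mul_left _ (Nat.le_add_left _ _)
  · have h33 : 33 ≤ g := hlt
    have hgc : 33 * g ^ 2 ≤ g ^ 3 := by
      calc 33 * g ^ 2 ≤ g * g ^ 2 := Nat.mul_le_mul_right _ h33
        _ = g ^ 3 := by ring
    linarith [key, hgc]
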